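/- Let p ≥ 2 and let H, x be integers with 1 < H < p, x > 0 and H ∤ x; set Q = ⌊x/H⌋, R = x mod H, and define b_y = p + H − 1 + y + (H − R)·⌊y/(p − H + 1)⌋ + (R − 1)·⌊(y − 1)/(p − H + 1)⌋ and a_y = H + y + ⌊(R − 1 + y)/(p − 1)⌋ for y ≥ 0. Then for all 0 ≤ y ≤ Q one has b_{x − 2Q + y − 1} ≥ a_{y + p − 2}. -/

import Mathlib

/-- `a_y = H + y + ⌊(R - 1 + y)/(p - 1)⌋` where `R = x - H·⌊x/H⌋`. -/
def aSeq (p H x t : ℤ) : ℤ :=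
  H + t + ((x - H * x.fdiv H) - 1 + t).fdiv (p - 1)

/-- `b_y = p + H - 1 + y + (H - R)·⌊y/(p - H + 1)⌋ + (R - 1)·⌊(y - 1)/(p - H + 1)⌋`. -/
def bSeq (p H x t : ℤ) : ℤ :=
  p + H - 1 + t + (H - (x - H * x.fdiv H)) * (t.fdiv (p - H + 1))
    + ((x - H * x.fdiv H) - 1) * ((t - 1).fdiv (p - H + 1))

lemma key_ineq (p H Q R y : ℤ) (hp : 2 ≤ p) (hH : 1 < H) (hHp : H < p)
    (hR0 : 0 < R) (hRH : R < H) (hy0 : 0 ≤ y) (hyQ : y ≤ Q) :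
    H + (y + p - 2) + (R - 1 + (y + p - 2)) / (p - 1)
      ≤ p + H - 1 + (H * Q + R - 2 * Q + y - 1)
        + (H - R) * ((H * Q + R - 2 * Q + y - 1) / (p - H + 1))
        + (R - 1) * ((H * Q + R - 2 * Q + y - 1 - 1) / (p - H + 1)) := by
  have hm0 : (0:ℤ) < p - H + 1 := by omega
  have hp1 : (0:ℤ) < p - 1 := by omega
  set m := p - H + 1 with hm
  set t := H * Q + R - 2 * Q + y - 1 with htdef
  have hQ0 : 0 ≤ Q := le_trans hy0 hyQ
  have ht0 : 0 ≤ t := by rw [htdef]; nlinarith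
  have hu0 : 0 ≤ t / m := Int.ediv_nonneg ht0 hm0.le
  have hA : (R - 1 + (y + p - 2)) / (p - 1) = (R + y - 2) / (p - 1) + 1 := by
    have h1 : R - 1 + (y + p - 2) = (R + y - 2) + 1 * (p - 1) := by ring
    rw [h1, Int.add_mul_ediv_right _ _ (by omega : p - 1 ≠ 0)]
  have hv : t / m - 1 ≤ (t - 1) / m := by
    have h1 : (t + (-1) * m) / m = t / m + (-1) :=
      Int.add_mul_ediv_right t (-1) (by omega : m ≠ 0)
    have h2 : (t + (-1) * m) / m ≤ (t - 1) / m :=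
      Int.ediv_le_ediv hm0 (by omega)
    omega
  have hkey : (R + y - 2) / (p - 1) ≤ Q * (H - 2) + (H - 1) * (t / m) := by
    rcases eq_or_lt_of_le (Int.add_one_le_iff.mpr hH) with h2 | h3
    · -- H = 2, so R = 1
      have hR1 : R = 1 := by omega
      have hteq : t = y := by rw [htdef]; rw [← h2] at *; ring_nf; omega
      have hmm : m = p - 1 := by omega
      have hmono : (R + y - 2) / (p - 1) ≤ y / (p - 1) :=
        Int.ediv_le_ediv hp1 (by omega)
      rw [hteq, hmm, ← h2]
      linarith
    · rcases eq_or_lt_of_le hQ0 with hQ | hQ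
      · -- Q = 0, hence y = 0
        have hy : y = 0 := by omega
        have hb1 : (R + y - 2) / (p - 1) ≤ (p - 2) / (p - 1) :=
          Int.ediv_le_ediv hp1 (by omega)
        have hb2 : (p - 2) / (p - 1) = 0 :=
          Int.ediv_eq_zero_of_lt (by omega) (by omega)
        have hb3 : 0 ≤ (H - 1) * (t / m) := mul_nonneg (by omega) hu0
        nlinarith
      · -- Q ≥ 1
        have h1 : (R + y - 2) / (p - 1) ≤ (Q * (p - 1)) / (p - 1) :=
          Int.ediv_le_ediv hp1 (by nlinarith)
        have h2' : Q * (p - 1) / (p - 1) = Q := Int.mul_ediv_cancel _ (by omega)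
        have h3' : Q ≤ Q * (H - 2) := by nlinarith
        have h4 : 0 ≤ (H - 1) * (t / m) := mul_nonneg (by omega) hu0
        linarith
  have hmul : (R - 1) * (t / m - 1) ≤ (R - 1) * ((t - 1) / m) :=
    mul_le_mul_of_nonneg_left hv (by omega)
  have hmul2 : (R - 1) * (t / m - 1) = (R - 1) * (t / m) - (R - 1) := by ring
  have hexp : (H - R) * (t / m) + (R - 1) * (t / m) = (H - 1) * (t / m) := by ring
  have hT : t - y - R + 1 = Q * (H - 2) := by rw [htdef]; ring
  rw [hA]
  linarith

/-- For `p ≥ 2`, `1 < H < p`, `x > 0`, `H ∤ x`, `Q = ⌊x/H⌋`, one has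
`b_{x - 2Q + y - 1} ≥ a_{y + p - 2}` for all `0 ≤ y ≤ Q`. -/
theorem stmt15 (p H x : ℤ) (hp : 2 ≤ p) (hH : 1 < H) (hHp : H < p)
    (hx : 0 < x) (hnd : ¬ H ∣ x)
    (y : ℤ) (hy0 : 0 ≤ y) (hyQ : y ≤ x.fdiv H) :
    aSeq p H x (y + p - 2) ≤ bSeq p H x (x - 2 * x.fdiv H + y - 1) := by
  have hfd : x.fdiv H = x / H := Int.fdiv_eq_ediv_of_nonneg x (by omega)
  have heq : H * (x / H) + x % H = x := Int.mul_ediv_add_emod x H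
  have hR0 : 0 < x % H := by
    have h1 : 0 ≤ x % H := Int.emod_nonneg x (by omega)
    have h2 : x % H ≠ 0 := fun h => hnd (Int.dvd_of_emod_eq_zero h)
    omega
  have hRH : x % H < H := Int.emod_lt_of_pos x (by omega)
  have hRdef : x - H * (x / H) = x % H := by omega
  unfold aSeq bSeq
  rw [hfd, hRdef]
  rw [Int.fdiv_eq_ediv_of_nonneg _ (by omega : (0:ℤ) ≤ p - 1),
      Int.fdiv_eq_ediv_of_nonneg _ (by omega : (0:ℤ) ≤ p - H + 1),
      Int.fdiv_eq_ediv_of_nonneg _ (by omega : (0:ℤ) ≤ p - H + 1)]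
  have hx2 : x - 2 * (x / H) + y - 1
      = H * (x / H) + x % H - 2 * (x / H) + y - 1 := by omega
  rw [hx2]
  exact key_ineq p H (x / H) (x % H) y hp hH hHp hR0 hRH hy0 (hfd ▸ hyQ)
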